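/- Let (W, S) be a finite Coxeter system and let q = (q₁,…,q_l) be a word in the simple reflections. Then the Demazure product δ(q) is greater than or equal to w in Bruhat order if and only if q contains a subword that is a reduced expression for w. -/

import Mathlib

/-- The Demazure product `δ(q)` of a word `q = (q₁, …, q_l)` in the simple reflections,
defined via the 0-Hecke relations (`H_{q₁} ⋯ H_{q_l} = H_{δ(q)}`): multiplying left to
right, a letter is used exactly when it increases the length. -/
noncomputable def demazureProd {B W : Type*} [Group W] {M : CoxeterMatrix B}
    (cs : CoxeterSystem M W) (q : List B) : W :=
  q.foldl (fun w i => if cs.length w < cs.length (w * cs.simple i)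
    then w * cs.simple i else w) 1

/-- Bruhat order on `W`, via the subword property: `u ≤ w` iff some reduced word for `w`
contains a subword that is a reduced word for `u`. -/
def bruhatLE {B W : Type*} [Group W] {M : CoxeterMatrix B}
    (cs : CoxeterSystem M W) (u w : W) : Prop :=
  ∃ lw : List B, cs.IsReduced lw ∧ cs.wordProd lw = w ∧
    ∃ lu : List B, lu.Sublist lw ∧ cs.IsReduced lu ∧ cs.wordProd lu = u

open List

namespace SE

variable {B W : Type*} [Group W] {M : CoxeterMatrix B} (cs : CoxeterSystem M W)

local prefix:100 "σ" => cs.simple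
local prefix:100 "π" => cs.wordProd
local prefix:100 "ℓ" => cs.length
local prefix:100 "ris" => cs.rightInvSeq
local prefix:100 "lis" => cs.leftInvSeq

/-- The group of `Multiplicative (ZMod 2)`-valued functions on `W`. -/
abbrev A (W : Type*) := W → Multiplicative (ZMod 2)

/-- action of `W` on `A W` by precomposition with conjugation -/
def domAct (w : W) : MulAut (A W) where
  toFun f := fun x => f (w⁻¹ * x * w)
  invFun f := fun x => f (w * x * w⁻¹)
  left_inv f := by
    funext x
    exact congrArg f (by group)
  right_inv f := by
    funext x
    exact congrArg f (by group)
  map_mul' f g := rfl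

def actHom : W →* MulAut (A W) where
  toFun := domAct
  map_one' := by
    ext f x
    show f (1⁻¹ * x * 1) = f x
    congr 1
    group
  map_mul' w₁ w₂ := by
    ext f x
    show f ((w₁ * w₂)⁻¹ * x * (w₁ * w₂)) = f (w₂⁻¹ * (w₁⁻¹ * x * w₁) * w₂)
    congr 1
    group

omit [Group W] in
theorem actHom_apply [Group W] (w : W) (f : A W) (x : W) :
    (actHom w f) x = f (w⁻¹ * x * w) := rfl

open Classical in
/-- indicator function -/
noncomputable def chi (t : W) : A W := fun x => if x = t then Multiplicative.ofAdd 1 else 1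

omit [Group W] in
theorem chi_self (t : W) : chi t t = Multiplicative.ofAdd 1 := by simp [chi]

omit [Group W] in
theorem chi_apply_ne {t x : W} (h : x ≠ t) : chi t x = 1 := by simp [chi, h]

omit [Group W] in
theorem chi_mul_self (t : W) : chi t * chi t = 1 := by
  funext x
  show chi t x * chi t x = 1
  by_cases h : x = t <;> simp [chi, h]
  decide

theorem actHom_chi (w t : W) : actHom w (chi t) = chi (w * t * w⁻¹) := by
  funext x
  rw [actHom_apply]
  unfold chi
  congr 1
  simp only [eq_iff_iff]
  constructor
  · intro h
    rw [show x = w * (w⁻¹ * x * w) * w⁻¹ by group, h]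
  · rintro rfl
    group

abbrev G (_cs : CoxeterSystem M W) := A W ⋊[(actHom : W →* MulAut (A W))] W

noncomputable def gen (i : B) : G cs := ⟨chi (σ i), σ i⟩

theorem mk_pow (f : A W) (u : W) (m : ℕ) :
    ((⟨f, u⟩ : G cs) ^ m) = ⟨∏ k ∈ Finset.range m, actHom (u ^ k) f, u ^ m⟩ := by
  induction m with
  | zero => rw [pow_zero, pow_zero, Finset.prod_range_zero]; rfl
  | succ m ih =>
    rw [pow_succ, ih, SemidirectProduct.mul_def]
    congr 1
    · rw [Finset.prod_range_succ]
    · rw [pow_succ]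

theorem simple_conj_aux (i i' : B) (k : ℕ) :
    (σ i * σ i') ^ k * σ i * ((σ i * σ i') ^ k)⁻¹ = (σ i * σ i') ^ (2 * k) * σ i := by
  have hcinv : (σ i * σ i')⁻¹ = σ i' * σ i := by
    rw [mul_inv_rev, cs.inv_simple, cs.inv_simple]
  have key : (σ i * σ i') * σ i * (σ i * σ i')⁻¹ = (σ i * σ i') ^ 2 * σ i := by
    rw [hcinv, pow_two]
    simp only [mul_assoc]
  induction k with
  | zero => simp
  | succ k ih =>
    calc (σ i * σ i') ^ (k+1) * σ i * ((σ i * σ i') ^ (k+1))⁻¹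
        = (σ i * σ i') * ((σ i * σ i') ^ k * σ i * ((σ i * σ i') ^ k)⁻¹) * (σ i * σ i')⁻¹ := by
          rw [pow_succ', mul_inv_rev]
          simp only [mul_assoc]
      _ = (σ i * σ i') * ((σ i * σ i') ^ (2*k) * σ i) * (σ i * σ i')⁻¹ := by rw [ih]
      _ = (σ i * σ i') ^ (2*k) * ((σ i * σ i') * σ i * (σ i * σ i')⁻¹) := by
          rw [← mul_assoc, ← mul_assoc, ← pow_succ', pow_succ]
          simp only [mul_assoc]
      _ = (σ i * σ i') ^ (2*k) * ((σ i * σ i') ^ 2 * σ i) := by rw [key]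
      _ = (σ i * σ i') ^ (2*(k+1)) * σ i := by
          rw [show 2*(k+1) = 2*k + 2 by ring, pow_add]
          simp only [mul_assoc]

theorem liftable : M.IsLiftable (gen cs) := by
  intro i j
  set c := σ i * σ j with hc
  set m := M i j with hm
  have hgen : gen cs i * gen cs j
      = (⟨chi (σ i) * actHom (σ i) (chi (σ j)), c⟩ : G cs) := rfl
  rw [hgen, mk_pow]
  have hcm : c ^ m = 1 := cs.simple_mul_simple_pow i j
  have hterm : ∀ k : ℕ, actHom (c ^ k) (chi (σ i) * actHom (σ i) (chi (σ j)))
      = chi (c ^ (2*k) * σ i) * chi (c ^ (2*k+1) * σ i) := by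
    intro k
    rw [actHom_chi (σ i) (σ j), map_mul, actHom_chi (c ^ k), actHom_chi (c ^ k)]
    congr 1
    · rw [simple_conj_aux]
    · have h1 : σ i * σ j * (σ i)⁻¹ = c * σ i := by
        rw [cs.inv_simple, hc]
      rw [h1, show c ^ k * (c * σ i) * (c ^ k)⁻¹ = c * (c ^ k * σ i * (c ^ k)⁻¹) by group,
        simple_conj_aux, show c * (c ^ (2*k) * σ i) = c ^ (2*k+1) * σ i by
          rw [← mul_assoc, ← pow_succ']]
  have hprod : (∏ k ∈ Finset.range m, actHom (c ^ k) (chi (σ i) * actHom (σ i) (chi (σ j)))) = 1 := by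
    calc (∏ k ∈ Finset.range m, actHom (c ^ k) (chi (σ i) * actHom (σ i) (chi (σ j))))
        = ∏ k ∈ Finset.range m, (chi (c ^ (2*k) * σ i) * chi (c ^ (2*k+1) * σ i)) := by
          exact Finset.prod_congr rfl (fun k _ => hterm k)
      _ = ∏ j ∈ Finset.range (2*m), chi (c ^ j * σ i) := by
          induction m with
          | zero => simp
          | succ n ihn =>
            rw [Finset.prod_range_succ, ihn, show 2*(n+1) = 2*n+1+1 by ring,
              Finset.prod_range_succ, Finset.prod_range_succ]
            group
      _ = ∏ j ∈ Finset.range m, (chi (c ^ j * σ i) * chi (c ^ (m + j) * σ i)) := by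
          rw [Finset.prod_mul_distrib, show 2*m = m + m by ring, Finset.prod_range_add]
      _ = ∏ j ∈ Finset.range m, (chi (c ^ j * σ i) * chi (c ^ j * σ i)) := by
          apply Finset.prod_congr rfl
          intro k _
          congr 2
          rw [pow_add, hcm, one_mul]
      _ = 1 := by
          apply Finset.prod_eq_one
          intro k _
          exact chi_mul_self _
  rw [hprod, hcm]
  rfl

/-- the parity homomorphism -/
noncomputable def phiHom : W →* G cs := cs.lift ⟨gen cs, liftable cs⟩

theorem phiHom_simple (i : B) : phiHom cs (σ i) = gen cs i :=
  cs.lift_apply_simple (liftable cs) i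

/-- the reflection-parity cocycle -/
noncomputable def nf (w : W) : A W := (phiHom cs w).left

theorem nf_wordProd (ω : List B) : nf cs (π ω) = ((lis ω).map chi).prod := by
  induction ω with
  | nil => simp [nf, CoxeterSystem.wordProd_nil, CoxeterSystem.leftInvSeq_nil]
  | cons i ω ih =>
    rw [CoxeterSystem.wordProd_cons]
    unfold nf
    rw [map_mul, phiHom_simple, SemidirectProduct.mul_left]
    show chi (σ i) * actHom (σ i) (nf cs (π ω)) = _
    rw [ih]
    show _ = ((lis (i :: ω)).map chi).prod
    rw [show lis (i :: ω) = σ i :: List.map (MulAut.conj (σ i)) (lis ω) from rfl]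
    rw [List.map_cons, List.prod_cons]
    congr 1
    rw [map_list_prod, List.map_map, List.map_map]
    congr 1
    apply List.map_congr_left
    intro t _
    show actHom (σ i) (chi t) = chi (MulAut.conj (σ i) t)
    rw [actHom_chi]
    rfl

omit [Group W] in
theorem prod_apply_eq_one [Group W] {l : List (A W)} {t : W} (h : ∀ f ∈ l, f t = 1) :
    l.prod t = 1 := by
  induction l with
  | nil => rfl
  | cons f l ihl =>
    rw [List.prod_cons]
    show f t * l.prod t = 1
    rw [h f List.mem_cons_self, ihl (fun g hg => h g (List.mem_cons_of_mem f hg)), mul_one]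

theorem chi_prod_of_not_mem {l : List W} {t : W} (h : t ∉ l) : ((l.map chi).prod) t = 1 := by
  apply prod_apply_eq_one
  intro f hf
  rw [List.mem_map] at hf
  obtain ⟨u, hu, rfl⟩ := hf
  exact chi_apply_ne (fun he => h (he ▸ hu))

theorem chi_prod_of_mem {l : List W} {t : W} (hnd : l.Nodup) (h : t ∈ l) :
    ((l.map chi).prod) t = Multiplicative.ofAdd 1 := by
  obtain ⟨l₁, l₂, rfl⟩ := List.append_of_mem h
  rw [List.map_append, List.map_cons, List.prod_append, List.prod_cons]
  have h1 : ((l₁.map chi).prod) t = 1 := by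
    apply chi_prod_of_not_mem
    intro hu
    exact (List.disjoint_of_nodup_append hnd) hu List.mem_cons_self
  have h2 : ((l₂.map chi).prod) t = 1 := by
    apply chi_prod_of_not_mem
    intro hu
    have := List.Nodup.of_append_right hnd
    rw [List.nodup_cons] at this
    exact this.1 hu
  show (l₁.map chi).prod t * (chi t * (l₂.map chi).prod) t = _
  show (l₁.map chi).prod t * (chi t t * (l₂.map chi).prod t) = _
  rw [h1, h2, chi_self, one_mul, mul_one]

theorem mem_of_nf_ne_one {ω : List B} {t : W} (h : nf cs (π ω) t ≠ 1) : t ∈ lis ω := by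
  by_contra hmem
  apply h
  rw [nf_wordProd]
  exact chi_prod_of_not_mem hmem

theorem nf_eq_of_mem {ω : List B} {t : W} (hnd : (lis ω).Nodup) (h : t ∈ lis ω) :
    nf cs (π ω) t = Multiplicative.ofAdd 1 := by
  rw [nf_wordProd]
  exact chi_prod_of_mem hnd h

theorem phiHom_right (w : W) : (phiHom cs w).right = w := by
  have : (SemidirectProduct.rightHom.comp (phiHom cs) : W →* W) = MonoidHom.id W := by
    apply cs.ext_simple
    intro i
    rw [MonoidHom.comp_apply, phiHom_simple]
    rfl
  calc (phiHom cs w).right = (SemidirectProduct.rightHom.comp (phiHom cs) : W →* W) w := rfl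
    _ = w := by rw [this]; rfl

theorem nf_mul_left (t w x : W) : nf cs (t * w) x = nf cs t x * nf cs w (t⁻¹ * x * t) := by
  unfold nf
  rw [map_mul, SemidirectProduct.mul_left, phiHom_right]
  rfl

theorem nf_reflection_self {t : W} (ht : cs.IsReflection t) :
    nf cs t t = Multiplicative.ofAdd 1 := by
  obtain ⟨w₀, i, rfl⟩ := ht
  set t := w₀ * σ i * w₀⁻¹ with hti
  have key : phiHom cs t = phiHom cs w₀ * gen cs i * (phiHom cs w₀)⁻¹ := by
    rw [hti, map_mul, map_mul, map_inv, phiHom_simple]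
  unfold nf
  rw [key]
  set f := (phiHom cs w₀).left with hf
  rw [SemidirectProduct.mul_left, SemidirectProduct.mul_left, SemidirectProduct.mul_right,
    SemidirectProduct.inv_left, phiHom_right]
  show (f * actHom w₀ (gen cs i).left
      * actHom (w₀ * (gen cs i).right) (actHom w₀⁻¹ f⁻¹)) t = Multiplicative.ofAdd 1
  have hgl : (gen cs i).left = chi (σ i) := rfl
  have hgr : (gen cs i).right = σ i := rfl
  rw [hgl, hgr, actHom_chi, ← hti]
  have hcomp : actHom (w₀ * σ i) (actHom w₀⁻¹ f⁻¹) = actHom t f⁻¹ := by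
    calc actHom (w₀ * σ i) (actHom w₀⁻¹ f⁻¹)
        = (actHom (w₀ * σ i) * actHom w₀⁻¹) f⁻¹ := rfl
      _ = actHom (w₀ * σ i * w₀⁻¹) f⁻¹ := by rw [← map_mul]
      _ = actHom t f⁻¹ := by rw [← hti]
  rw [hcomp]
  show f t * chi t t * (actHom t f⁻¹) t = Multiplicative.ofAdd 1
  rw [chi_self, actHom_apply]
  have : t⁻¹ * t * t = t := by group
  rw [this]
  show f t * Multiplicative.ofAdd 1 * (f t)⁻¹ = Multiplicative.ofAdd 1
  rw [mul_comm (f t) (Multiplicative.ofAdd 1), mul_assoc, mul_inv_cancel, mul_one]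

theorem strongExchangeLeft {t : W} (ht : cs.IsReflection t) {w : W} (hlt : ℓ (t * w) < ℓ w)
    {ω : List B} (hred : cs.IsReduced ω) (hprod : π ω = w) : t ∈ lis ω := by
  by_contra hmem
  have h0 : nf cs w t = 1 := by
    by_contra h
    rw [← hprod] at h
    exact hmem (mem_of_nf_ne_one cs h)
  have h1 : nf cs (t * w) t = Multiplicative.ofAdd 1 := by
    rw [nf_mul_left, nf_reflection_self cs ht, show t⁻¹ * t * t = t by group, h0, mul_one]
  obtain ⟨α, hαred, hαprod⟩ := cs.exists_reduced_word' (t * w)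
  have hmem' : t ∈ lis α := by
    apply mem_of_nf_ne_one cs
    rw [hαprod] at h1
    rw [h1]
    decide
  have hinv := cs.isLeftInversion_of_mem_leftInvSeq hαred hmem'
  rw [← hαprod] at hinv
  have : ℓ (t * (t * w)) < ℓ (t * w) := hinv.2
  rw [← mul_assoc, ht.mul_self, one_mul] at this
  omega

theorem strongExchangeRight {t : W} (ht : cs.IsReflection t) {w : W} (hlt : ℓ (w * t) < ℓ w)
    {ω : List B} (hred : cs.IsReduced ω) (hprod : π ω = w) : t ∈ ris ω := by
  have h1 : ℓ (t * w⁻¹) < ℓ w⁻¹ := by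
    rw [cs.length_inv]
    calc ℓ (t * w⁻¹) = ℓ ((t * w⁻¹)⁻¹) := (cs.length_inv _).symm
      _ = ℓ (w * t⁻¹) := by rw [mul_inv_rev, inv_inv]
      _ = ℓ (w * t) := by rw [ht.inv]
      _ < ℓ w := hlt
  have h2 : cs.IsReduced ω.reverse := (cs.isReduced_reverse_iff ω).mpr hred
  have h3 : π ω.reverse = w⁻¹ := by rw [cs.wordProd_reverse, hprod]
  have := strongExchangeLeft cs ht h1 h2 h3
  rw [cs.leftInvSeq_reverse] at this
  exact (List.mem_reverse).mp this

/-- strong exchange in the "erase a letter" form -/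
theorem exists_eraseIdx_of_mul_reflection {t : W} (ht : cs.IsReflection t) {w : W}
    (hlt : ℓ (w * t) < ℓ w) {ω : List B} (hred : cs.IsReduced ω) (hprod : π ω = w) :
    ∃ j, j < ω.length ∧ π (ω.eraseIdx j) = w * t := by
  have hmem := strongExchangeRight cs ht hlt hred hprod
  obtain ⟨j, hj, hget⟩ := List.mem_iff_getElem.mp hmem
  rw [cs.length_rightInvSeq] at hj
  refine ⟨j, hj, ?_⟩
  have := cs.wordProd_mul_getD_rightInvSeq ω j
  rw [List.getD_eq_getElem _ 1 (by rw [cs.length_rightInvSeq]; exact hj), hget, hprod] at this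
  exact this.symm

/-! ### Part 2: the Bruhat (chain) order and the subword property -/

/-- one downward step in the Bruhat order -/
def down (u v : W) : Prop := ∃ t, cs.IsReflection t ∧ v = u * t ∧ ℓ v < ℓ u

/-- Bruhat order via chains of reflections -/
def ble (u v : W) : Prop := Relation.ReflTransGen (down cs) v u

theorem ble_refl (u : W) : ble cs u u := Relation.ReflTransGen.refl

theorem length_le_of_ble {u v : W} (h : ble cs u v) : ℓ u ≤ ℓ v := by
  induction h with
  | refl => exact le_refl _
  | tail _ hstep ih => obtain ⟨t, _, _, hlt⟩ := hstep; omega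

/-- extraction of a reduced sublist with the same product -/
theorem exists_reduced_sublist (α : List B) :
    ∃ β : List B, β.Sublist α ∧ cs.IsReduced β ∧ π β = π α := by
  induction α using List.reverseRecOn with
  | nil => exact ⟨[], List.Sublist.refl _, by simp [CoxeterSystem.IsReduced], rfl⟩
  | append_singleton α' i ih =>
    obtain ⟨β, hsub, hred, hprod⟩ := ih
    rcases cs.length_mul_simple (π β) i with hup | hdown
    · refine ⟨β ++ [i], hsub.append (List.Sublist.refl [i]), ?_, ?_⟩
      · show ℓ (π (β ++ [i])) = _
        rw [cs.wordProd_append, List.length_append, CoxeterSystem.wordProd_singleton, hup, hred]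
        simp
      · rw [cs.wordProd_append, cs.wordProd_append, hprod]
    · have hlt : ℓ (π β * σ i) < ℓ (π β) := by omega
      obtain ⟨j, hj, hje⟩ := exists_eraseIdx_of_mul_reflection cs
        (cs.isReflection_simple i) hlt hred rfl
      refine ⟨β.eraseIdx j, ((β.eraseIdx_sublist j).trans hsub).trans
        (List.sublist_append_left α' [i]), ?_, ?_⟩
      · show ℓ (π (β.eraseIdx j)) = _
        rw [hje]
        have hlen : (β.eraseIdx j).length = β.length - 1 := by
          simp [List.length_eraseIdx, hj]
        rw [hlen, ← hred]
        omega
      · rw [hje, cs.wordProd_append, hprod, CoxeterSystem.wordProd_singleton]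

/-- chains give subwords of every reduced word -/
theorem subword_of_ble {u v : W} (h : ble cs u v) :
    ∀ α : List B, cs.IsReduced α → π α = v →
      ∃ β : List B, β.Sublist α ∧ cs.IsReduced β ∧ π β = u := by
  induction h with
  | refl =>
    intro α hred hprod
    exact ⟨α, List.Sublist.refl _, hred, hprod⟩
  | tail _ hstep ih =>
    intro α hred hprod
    rename_i b c _
    obtain ⟨β₀, hsub₀, hred₀, hprod₀⟩ := ih α hred hprod
    obtain ⟨t, ht, rfl, hlt⟩ := hstep
    rw [← hprod₀] at hlt
    obtain ⟨j, hj, hje⟩ := exists_eraseIdx_of_mul_reflection cs ht hlt hred₀ rfl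
    obtain ⟨β, hsub, hredβ, hprodβ⟩ := exists_reduced_sublist cs (β₀.eraseIdx j)
    refine ⟨β, (hsub.trans (β₀.eraseIdx_sublist j)).trans hsub₀, hredβ, ?_⟩
    rw [hprodβ, hje, hprod₀]

theorem sublist_concat_cases {β α : List B} {i : B} (h : β.Sublist (α ++ [i])) :
    β.Sublist α ∨ ∃ β', β = β' ++ [i] ∧ β'.Sublist α := by
  rw [List.sublist_append_iff] at h
  obtain ⟨x, y, rfl, hx, hy⟩ := h
  rcases List.sublist_singleton.mp hy with rfl | rfl
  · left; simpa using hx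
  · right; exact ⟨x, rfl, hx⟩

theorem TXX (n : ℕ) :
    (∀ α : List B, cs.IsReduced α → α.length ≤ n →
      ∀ β : List B, β.Sublist α → ble cs (π β) (π α)) ∧
    (∀ u w : W, ℓ w ≤ n → ble cs u w → ∀ i : B, ℓ w < ℓ (w * σ i) →
      ble cs (u * σ i) (w * σ i)) ∧
    (∀ u w : W, ℓ w ≤ n → ble cs u w → ∀ i : B, ℓ (w * σ i) < ℓ w →
      ble cs (u * σ i) w) := by
  induction n using Nat.strong_induction_on with
  | _ n IH =>
  have hX : ∀ u w : W, ℓ w ≤ n → ble cs u w → ∀ i : B, ℓ w < ℓ (w * σ i) →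
      ble cs (u * σ i) (w * σ i) := by
    intro u w hwn hle i hup
    rcases Relation.ReflTransGen.cases_head hle with heq | ⟨b, hstep, hchain⟩
    · rw [heq]; exact ble_refl cs _
    obtain ⟨t, ht, rfl, hltb⟩ := hstep
    have hlt' : ℓ (w * t) < n := by omega
    rcases cs.length_mul_simple (w * t) i with hup' | hdown'
    · have hb := (IH (ℓ (w * t)) hlt').2.1 u (w * t) le_rfl hchain i (by omega)
      refine Relation.ReflTransGen.head ?_ hb
      refine ⟨σ i * t * σ i, ?_, ?_, by omega⟩
      · have := ht.conj (σ i); rwa [cs.inv_simple] at this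
      · simp only [mul_assoc, cs.simple_mul_simple_cancel_left]
    · have hb := (IH (ℓ (w * t)) hlt').2.2 u (w * t) le_rfl hchain i (by omega)
      refine Relation.ReflTransGen.head (b := w) ?_
        (Relation.ReflTransGen.head (b := w * t) ?_ hb)
      · exact ⟨σ i, cs.isReflection_simple i,
          (cs.simple_mul_simple_cancel_right i).symm, hup⟩
      · exact ⟨t, ht, rfl, hltb⟩
  have hT : ∀ α : List B, cs.IsReduced α → α.length ≤ n →
      ∀ β : List B, β.Sublist α → ble cs (π β) (π α) := by
    intro α hred hlen β hsub
    rcases List.eq_nil_or_concat α with rfl | ⟨α', i, rfl⟩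
    · rw [List.sublist_nil.mp hsub]; exact ble_refl cs _
    rw [List.concat_eq_append] at hred hlen hsub ⊢
    have hα' : cs.IsReduced α' := by
      have := hred.take α'.length
      rwa [List.take_left] at this
    have hlα : ℓ (π (α' ++ [i])) = α'.length + 1 := by
      rw [hred, List.length_append, List.length_singleton]
    have hπ : π (α' ++ [i]) = π α' * σ i := by
      rw [cs.wordProd_append, cs.wordProd_singleton]
    have hx : ℓ (π α') = α'.length := hα'
    have hup : ℓ (π α') < ℓ (π α' * σ i) := by rw [← hπ, hlα, hx]; omega
    have hlen1 : α'.length + 1 ≤ n := by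
      rw [List.length_append, List.length_singleton] at hlen; exact hlen
    rcases sublist_concat_cases hsub with hβ | ⟨β', rfl, hβ'⟩
    · have h1 := (IH (n - 1) (by omega)).1 α' hα' (by omega) β hβ
      refine Relation.ReflTransGen.head ?_ h1
      refine ⟨σ i, cs.isReflection_simple i, ?_, by omega⟩
      rw [hπ, cs.simple_mul_simple_cancel_right]
    · have h1 := (IH (n - 1) (by omega)).1 α' hα' (by omega) β' hβ'
      have h2 := hX (π β') (π α') (by omega) h1 i hup
      rw [hπ, cs.wordProd_append, cs.wordProd_singleton]
      exact h2
  have hX2 : ∀ u w : W, ℓ w ≤ n → ble cs u w → ∀ i : B, ℓ (w * σ i) < ℓ w →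
      ble cs (u * σ i) w := by
    intro u w hwn hle i hdown
    have hdich := cs.length_mul_simple w i
    obtain ⟨α', hα'red, hα'prod⟩ := cs.exists_reduced_word' (w * σ i)
    have hα'len : α'.length = ℓ (w * σ i) := by rw [← hα'red, ← hα'prod]
    have hαprod : π (α' ++ [i]) = w := by
      rw [cs.wordProd_append, cs.wordProd_singleton, ← hα'prod,
        cs.simple_mul_simple_cancel_right]
    have hαred : cs.IsReduced (α' ++ [i]) := by
      show ℓ (π (α' ++ [i])) = _
      rw [hαprod, List.length_append, List.length_singleton, hα'len]
      omega
    have hαlen : (α' ++ [i]).length ≤ n := by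
      rw [List.length_append, List.length_singleton, hα'len]
      omega
    obtain ⟨β, hsub, hβred, hβprod⟩ := subword_of_ble cs hle _ hαred hαprod
    rcases sublist_concat_cases hsub with hβ | ⟨β', rfl, hβ'⟩
    · rcases cs.length_mul_simple u i with hu | hd
      · have h := hT (α' ++ [i]) hαred hαlen (β ++ [i])
          (hβ.append (List.Sublist.refl [i]))
        rw [cs.wordProd_append, cs.wordProd_singleton, hβprod, hαprod] at h
        exact h
      · exact Relation.ReflTransGen.tail hle
          ⟨σ i, cs.isReflection_simple i, rfl, by omega⟩
    · have h := hT (α' ++ [i]) hαred hαlen β'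
        (hβ'.trans (List.sublist_append_left α' [i]))
      rw [hαprod] at h
      have : π β' = u * σ i := by
        rw [cs.wordProd_append, cs.wordProd_singleton] at hβprod
        rw [← hβprod, cs.simple_mul_simple_cancel_right]
      rwa [this] at h
  exact ⟨hT, hX, hX2⟩

/-- T: any sublist of a reduced word is Bruhat-below -/
theorem ble_of_sublist {α β : List B} (hred : cs.IsReduced α) (hsub : β.Sublist α) :
    ble cs (π β) (π α) :=
  (TXX cs α.length).1 α hred le_rfl β hsub

theorem ble_mul_simple {u w : W} (h : ble cs u w) (i : B) (hup : ℓ w < ℓ (w * σ i)) :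
    ble cs (u * σ i) (w * σ i) :=
  (TXX cs (ℓ w)).2.1 u w le_rfl h i hup

theorem ble_mul_simple_down {u w : W} (h : ble cs u w) (i : B) (hdown : ℓ (w * σ i) < ℓ w) :
    ble cs (u * σ i) w :=
  (TXX cs (ℓ w)).2.2 u w le_rfl h i hdown

/-- the subword predicate -/
abbrev P (q : List B) (w : W) : Prop :=
  ∃ q' : List B, q'.Sublist q ∧ cs.IsReduced q' ∧ π q' = w

theorem isReduced_nil : cs.IsReduced ([] : List B) := by
  show ℓ (π []) = _
  rw [cs.wordProd_nil, cs.length_one, List.length_nil]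

theorem P_concat_iff (q : List B) (i : B) (w : W) :
    P cs (q ++ [i]) w ↔ P cs q w ∨ (ℓ (w * σ i) < ℓ w ∧ P cs q (w * σ i)) := by
  constructor
  · rintro ⟨q', hsub, hred, hprod⟩
    rcases sublist_concat_cases hsub with hq | ⟨q'', rfl, hq⟩
    · exact Or.inl ⟨q', hq, hred, hprod⟩
    · right
      rw [cs.wordProd_append, cs.wordProd_singleton] at hprod
      have hlq : ℓ w = q''.length + 1 := by
        have h0 : ℓ (π (q'' ++ [i])) = (q'' ++ [i]).length := hred
        rw [cs.wordProd_append, cs.wordProd_singleton, hprod] at h0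
        rw [h0, List.length_append, List.length_singleton]
      have hq''prod : π q'' = w * σ i := by
        rw [← hprod, cs.simple_mul_simple_cancel_right]
      have hlered : ℓ (w * σ i) ≤ q''.length := by
        rw [← hq''prod]; exact cs.length_wordProd_le q''
      have hdich := cs.length_mul_simple w i
      constructor
      · omega
      · refine ⟨q'', hq, ?_, hq''prod⟩
        show ℓ (π q'') = _
        rw [hq''prod]
        omega
  · rintro (⟨q', hsub, hred, hprod⟩ | ⟨hdown, q', hsub, hred, hprod⟩)
    · exact ⟨q', hsub.trans (List.sublist_append_left q [i]), hred, hprod⟩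
    · refine ⟨q' ++ [i], hsub.append (List.Sublist.refl [i]), ?_, ?_⟩
      · show ℓ (π (q' ++ [i])) = _
        have hdich := cs.length_mul_simple w i
        rw [cs.wordProd_append, cs.wordProd_singleton, hprod,
          cs.simple_mul_simple_cancel_right, List.length_append, List.length_singleton]
        have : ℓ (π q') = q'.length := hred
        rw [hprod] at this
        omega
      · rw [cs.wordProd_append, cs.wordProd_singleton, hprod,
          cs.simple_mul_simple_cancel_right]

theorem demazureProd_concat (q : List B) (i : B) :
    demazureProd cs (q ++ [i]) =
      if ℓ (demazureProd cs q) < ℓ (demazureProd cs q * σ i)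
      then demazureProd cs q * σ i else demazureProd cs q := by
  unfold demazureProd
  rw [List.foldl_append, List.foldl_cons, List.foldl_nil]

theorem ble_lift {v w : W} {i : B} (hup : ℓ v < ℓ (v * σ i)) :
    ble cs w (v * σ i) ↔ ble cs w v ∨ (ℓ (w * σ i) < ℓ w ∧ ble cs (w * σ i) v) := by
  constructor
  · intro h
    obtain ⟨α', hα'red, hα'prod⟩ := cs.exists_reduced_word' v
    have hα'len : α'.length = ℓ v := by rw [← hα'red, ← hα'prod]
    have hαprod : π (α' ++ [i]) = v * σ i := by
      rw [cs.wordProd_append, cs.wordProd_singleton, ← hα'prod]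
    have hαred : cs.IsReduced (α' ++ [i]) := by
      show ℓ (π (α' ++ [i])) = _
      have hdich := cs.length_mul_simple v i
      rw [hαprod, List.length_append, List.length_singleton, hα'len]
      omega
    obtain ⟨β, hsub, hβred, hβprod⟩ := subword_of_ble cs h _ hαred hαprod
    rcases sublist_concat_cases hsub with hβ | ⟨β', rfl, hβ⟩
    · left
      have := ble_of_sublist cs hα'red hβ
      rwa [hβprod, ← hα'prod] at this
    · right
      rw [cs.wordProd_append, cs.wordProd_singleton] at hβprod
      have hβ'prod : π β' = w * σ i := by
        rw [← hβprod, cs.simple_mul_simple_cancel_right]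
      have hlw : ℓ w = β'.length + 1 := by
        have h0 : ℓ (π (β' ++ [i])) = (β' ++ [i]).length := hβred
        rw [cs.wordProd_append, cs.wordProd_singleton, hβprod] at h0
        rw [h0, List.length_append, List.length_singleton]
      have hle : ℓ (w * σ i) ≤ β'.length := by
        rw [← hβ'prod]; exact cs.length_wordProd_le β'
      have hdich := cs.length_mul_simple w i
      refine ⟨by omega, ?_⟩
      have := ble_of_sublist cs hα'red hβ
      rwa [hβ'prod, ← hα'prod] at this
  · rintro (h | ⟨hdown, h⟩)
    · exact Relation.ReflTransGen.head
        ⟨σ i, cs.isReflection_simple i, (cs.simple_mul_simple_cancel_right i).symm, hup⟩ h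
    · have := ble_mul_simple cs h i hup
      rwa [cs.simple_mul_simple_cancel_right] at this

theorem P_iff_ble (q : List B) (w : W) :
    P cs q w ↔ ble cs w (demazureProd cs q) := by
  induction q using List.reverseRecOn generalizing w with
  | nil =>
    have hδ : demazureProd cs ([] : List B) = 1 := rfl
    rw [hδ]
    constructor
    · rintro ⟨q', hsub, _, hprod⟩
      rw [List.sublist_nil.mp hsub, cs.wordProd_nil] at hprod
      rw [← hprod]
      exact ble_refl cs 1
    · intro h
      have := length_le_of_ble cs h
      rw [cs.length_one] at this
      have hw : w = 1 := by
        rw [← cs.length_eq_zero_iff]; omega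
      exact ⟨[], List.nil_sublist _, isReduced_nil cs, by rw [cs.wordProd_nil, hw]⟩
  | append_singleton q i ih =>
    rw [P_concat_iff, demazureProd_concat]
    rcases cs.length_mul_simple (demazureProd cs q) i with hup | hdown
    · rw [if_pos (by omega), ble_lift cs (by omega), ih, ih]
    · rw [if_neg (by omega), ih, ih]
      constructor
      · rintro (h | ⟨_, h2⟩)
        · exact h
        · have := ble_mul_simple_down cs h2 i (by omega)
          rwa [cs.simple_mul_simple_cancel_right] at this
      · exact Or.inl

end SE

/-- In a finite Coxeter system `(W, S)`, for any word `q` in the simple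
reflections and any `w ∈ W`, the Demazure product satisfies `δ(q) ≥ w` in Bruhat order
if and only if `q` contains a subword that is a reduced expression for `w`. -/
theorem stmt4 {B W : Type*} [Group W] [Finite W] {M : CoxeterMatrix B}
    (cs : CoxeterSystem M W) (q : List B) (w : W) :
    bruhatLE cs w (demazureProd cs q) ↔
      ∃ q' : List B, q'.Sublist q ∧ cs.IsReduced q' ∧ cs.wordProd q' = w := by
  constructor
  · rintro ⟨lw, hlwred, hlwprod, lu, hsub, hlured, hluprod⟩
    have h1 := SE.ble_of_sublist cs hlwred hsub
    rw [hluprod, hlwprod] at h1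
    exact (SE.P_iff_ble cs q w).mpr h1
  · intro hP
    have hble := (SE.P_iff_ble cs q w).mp hP
    obtain ⟨lw, hred, heq⟩ := cs.exists_reduced_word' (demazureProd cs q)
    obtain ⟨β, hsub, hβred, hβprod⟩ := SE.subword_of_ble cs hble lw hred heq.symm
    exact ⟨lw, hred, heq.symm, β, hsub, hβred, hβprod⟩
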